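/- Let A be a 1QFAC over a finite alphabet Σ with k classical states and n quantum basis states that recognizes a language L ⊆ Σ* with cut-point λ isolated by ε. Then the number of equivalence classes of Σ* under the Myhill–Nerode equivalence ≡_L (equivalently, the number of states of the minimal DFA accepting L) is at most k(1 + 2/ε)^{2n}. -/

import Mathlib

noncomputable section

/-- The `n`-dimensional complex Hilbert space `ℂⁿ`. -/
abbrev QState (n : ℕ) := EuclideanSpace ℂ (Fin n)

/-- Apply a matrix to a vector of `ℂⁿ`. -/
def mApply {n : ℕ} (M : Matrix (Fin n) (Fin n) ℂ) (v : QState n) : QState n :=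
  Matrix.toEuclideanLin M v

/-- Myhill–Nerode equivalence: `x ≡_L y` iff `∀ z, xz ∈ L ↔ yz ∈ L`. -/
def mnEquiv {α : Type} (L : Set (List α)) (x y : List α) : Prop :=
  ∀ z : List α, x ++ z ∈ L ↔ y ++ z ∈ L

/-- Myhill–Nerode equivalence as a setoid. -/
def mnSetoid {α : Type} (L : Set (List α)) : Setoid (List α) where
  r := mnEquiv L
  iseqv := ⟨fun _ _ => Iff.rfl, fun h z => (h z).symm, fun h1 h2 z => (h1 z).trans (h2 z)⟩

/-- A 1QFAC: classical states `S` with initial state and transitions, an `n`-dimensional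
quantum part with a unit initial vector, a unitary for each (classical state, letter),
and an orthogonal projection (accepting measurement) for each classical state. -/
structure QFAC (Alph : Type) (S : Type) (n : ℕ) where
  s0 : S
  tr : S → Alph → S
  ψ0 : QState n
  ψ0_unit : ‖ψ0‖ = 1
  U : S → Alph → Matrix (Fin n) (Fin n) ℂ
  U_unitary : ∀ s σ, U s σ ∈ Matrix.unitaryGroup (Fin n) ℂ
  P : S → Matrix (Fin n) (Fin n) ℂ
  P_proj : ∀ s, (P s).conjTranspose = P s ∧ P s * P s = P s

namespace QFAC
variable {Alph S : Type} {n : ℕ}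

/-- `s_x`: the classical state reached after reading `x`. -/
def sState (A : QFAC Alph S n) (x : List Alph) : S := x.foldl A.tr A.s0

/-- `|ψ_x⟩`: the final quantum state after reading `x`. -/
def qState (A : QFAC Alph S n) (x : List Alph) : QState n :=
  (x.foldl (fun p σ => (A.tr p.1 σ, mApply (A.U p.1 σ) p.2)) (A.s0, A.ψ0)).2

/-- Acceptance probability `‖P_{s_x,acc}|ψ_x⟩‖²`. -/
def probAcc (A : QFAC Alph S n) (x : List Alph) : ℝ :=
  ‖mApply (A.P (A.sState x)) (A.qState x)‖ ^ 2

/-- Recognition with cut-point `lam` isolated by `ε`. -/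
def Recognizes (A : QFAC Alph S n) (L : Set (List Alph)) (lam ε : ℝ) : Prop :=
  (∀ x ∈ L, lam + ε ≤ A.probAcc x) ∧ (∀ x ∉ L, A.probAcc x ≤ lam - ε)

end QFAC

open Metric MeasureTheory Module


lemma mApply_sub {n : ℕ} (M : Matrix (Fin n) (Fin n) ℂ) (u v : QState n) :
    mApply M (u - v) = mApply M u - mApply M v := map_sub _ _ _

lemma mApply_mApply {n : ℕ} (M N : Matrix (Fin n) (Fin n) ℂ) (v : QState n) :
    mApply M (mApply N v) = mApply (M * N) v := by
  simp [mApply, Matrix.toEuclideanLin_apply, Matrix.mulVec_mulVec]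

lemma mApply_one {n : ℕ} (v : QState n) : mApply 1 v = v := by
  simp [mApply, Matrix.toEuclideanLin_apply]

lemma norm_mApply_unitary {n : ℕ} {U : Matrix (Fin n) (Fin n) ℂ}
    (hU : U ∈ Matrix.unitaryGroup (Fin n) ℂ) (v : QState n) :
    ‖mApply U v‖ = ‖v‖ := by
  have h1 : star U * U = 1 := Matrix.mem_unitaryGroup_iff'.mp hU
  have hinner : (inner ℂ (mApply U v) (mApply U v) : ℂ) = inner ℂ v v := by
    have hadj : Matrix.toEuclideanLin (star U) = LinearMap.adjoint (Matrix.toEuclideanLin U) := by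
      rw [Matrix.star_eq_conjTranspose, Matrix.toEuclideanLin_conjTranspose_eq_adjoint]
    calc (inner ℂ (mApply U v) (mApply U v) : ℂ)
        = inner ℂ v (LinearMap.adjoint (Matrix.toEuclideanLin U) (mApply U v)) := by
          rw [LinearMap.adjoint_inner_right]; rfl
      _ = inner ℂ v (mApply (star U) (mApply U v)) := by rw [← hadj]; rfl
      _ = inner ℂ v v := by rw [mApply_mApply, h1, mApply_one]
  have h2 : ‖mApply U v‖ ^ 2 = ‖v‖ ^ 2 := by
    rw [← inner_self_eq_norm_sq (𝕜 := ℂ), ← inner_self_eq_norm_sq (𝕜 := ℂ), hinner]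
  nlinarith [norm_nonneg (mApply U v), norm_nonneg v]

lemma norm_mApply_proj_le {n : ℕ} {P : Matrix (Fin n) (Fin n) ℂ}
    (h1 : P.conjTranspose = P) (h2 : P * P = P) (v : QState n) :
    ‖mApply P v‖ ≤ ‖v‖ := by
  have hadj : Matrix.toEuclideanLin P = LinearMap.adjoint (Matrix.toEuclideanLin P) := by
    conv_lhs => rw [← h1]
    rw [Matrix.toEuclideanLin_conjTranspose_eq_adjoint]
  have hinner : (inner ℂ (mApply P v) (mApply P v) : ℂ) = inner ℂ v (mApply P v) := by
    calc (inner ℂ (mApply P v) (mApply P v) : ℂ)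
        = inner ℂ (LinearMap.adjoint (Matrix.toEuclideanLin P) v) (mApply P v) := by rw [← hadj]; rfl
      _ = inner ℂ v (mApply P (mApply P v)) := by rw [LinearMap.adjoint_inner_left]; rfl
      _ = inner ℂ v (mApply P v) := by rw [mApply_mApply, h2]
  have hsq : ‖mApply P v‖ ^ 2 ≤ ‖v‖ * ‖mApply P v‖ := by
    have := inner_self_eq_norm_sq (𝕜 := ℂ) (mApply P v)
    have hre : ‖mApply P v‖ ^ 2 = RCLike.re (inner ℂ v (mApply P v) : ℂ) := by
      rw [← hinner, inner_self_eq_norm_sq]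
    have habs : RCLike.re (inner ℂ v (mApply P v) : ℂ) ≤ ‖(inner ℂ v (mApply P v) : ℂ)‖ :=
      RCLike.re_le_norm _
    have hcs : ‖(inner ℂ v (mApply P v) : ℂ)‖ ≤ ‖v‖ * ‖mApply P v‖ := norm_inner_le_norm _ _
    linarith
  rcases eq_or_lt_of_le (norm_nonneg (mApply P v)) with h | h
  · rw [← h]; exact norm_nonneg v
  · nlinarith

lemma packing_finset {E : Type*} [NormedAddCommGroup E] [NormedSpace ℝ E]
    [FiniteDimensional ℝ E] {ε : ℝ} (hε : 0 < ε)
    (s : Finset E) (hs : ∀ c ∈ s, ‖c‖ ≤ 1)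
    (h : ∀ c ∈ s, ∀ d ∈ s, c ≠ d → ε ≤ ‖c - d‖) :
    (s.card : ℝ) ≤ (1 + 2 / ε) ^ finrank ℝ E := by
  borelize E
  set μ : Measure E := Measure.addHaar with hμ
  set δ : ℝ := ε / 2 with hδ
  set ρ : ℝ := 1 + ε / 2 with hρ
  have δpos : 0 < δ := by positivity
  have ρpos : 0 < ρ := by positivity
  set A := ⋃ c ∈ s, ball (c : E) δ with hA
  have D : Set.Pairwise (s : Set E) (Function.onFun Disjoint fun c => ball (c : E) δ) := by
    rintro c hc d hd hcd
    apply ball_disjoint_ball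
    rw [dist_eq_norm]
    have := h c hc d hd hcd
    rw [hδ]; linarith
  have A_subset : A ⊆ ball (0 : E) ρ := by
    refine Set.iUnion₂_subset fun x hx => ?_
    apply ball_subset_ball'
    calc δ + dist x 0 ≤ δ + 1 := by
          rw [dist_zero_right]; exact add_le_add le_rfl (hs x hx)
      _ = ρ := by rw [hδ, hρ]; ring
  have I :
      (s.card : ENNReal) * ENNReal.ofReal (δ ^ finrank ℝ E) * μ (ball 0 1) ≤
        ENNReal.ofReal (ρ ^ finrank ℝ E) * μ (ball 0 1) := by
    calc
      (s.card : ENNReal) * ENNReal.ofReal (δ ^ finrank ℝ E) * μ (ball 0 1) = μ A := by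
        rw [hA, measure_biUnion_finset D fun c _ => measurableSet_ball]
        simp only [μ.addHaar_ball_of_pos _ δpos]
        simp only [Finset.sum_const, nsmul_eq_mul, mul_assoc]
      _ ≤ μ (ball (0 : E) ρ) := measure_mono A_subset
      _ = ENNReal.ofReal (ρ ^ finrank ℝ E) * μ (ball 0 1) := by
        simp only [μ.addHaar_ball_of_pos _ ρpos]
  have J : (s.card : ENNReal) * ENNReal.ofReal (δ ^ finrank ℝ E) ≤
      ENNReal.ofReal (ρ ^ finrank ℝ E) :=
    (ENNReal.mul_le_mul_iff_left (measure_ball_pos _ _ zero_lt_one).ne' measure_ball_lt_top.ne).1 I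
  have K : (s.card : ℝ) * δ ^ finrank ℝ E ≤ ρ ^ finrank ℝ E := by
    have := ENNReal.toReal_le_of_le_ofReal (pow_nonneg ρpos.le _) J
    simpa [ENNReal.toReal_mul, ENNReal.toReal_ofReal (pow_nonneg δpos.le _)] using this
  calc (s.card : ℝ) ≤ ρ ^ finrank ℝ E / δ ^ finrank ℝ E :=
        (le_div_iff₀ (pow_pos δpos _)).2 K
    _ = (1 + 2 / ε) ^ finrank ℝ E := by
        rw [← div_pow]
        congr 1
        rw [hρ, hδ]
        field_simp
        ring

lemma packing_set {E : Type*} [NormedAddCommGroup E] [NormedSpace ℝ E]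
    [FiniteDimensional ℝ E] {ε : ℝ} (hε : 0 < ε)
    (T : Set E) (hT : ∀ c ∈ T, ‖c‖ ≤ 1)
    (hsep : ∀ c ∈ T, ∀ d ∈ T, c ≠ d → ε ≤ ‖c - d‖) :
    T.Finite := by
  by_contra h
  have hinf : T.Infinite := h
  obtain ⟨t, hts, hcard⟩ :=
    hinf.exists_subset_card_eq (⌊(1 + 2 / ε) ^ finrank ℝ E⌋₊ + 1)
  have hb := packing_finset hε t (fun c hc => hT c (hts hc))
    (fun c hc d hd hcd => hsep c (hts hc) d (hts hd) hcd)
  have : t.card ≤ ⌊(1 + 2 / ε) ^ finrank ℝ E⌋₊ := Nat.le_floor hb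
  omega


namespace QFAC
variable {Alph S : Type} {n : ℕ}

/-- The combined classical+quantum step. -/
def step (A : QFAC Alph S n) : S × QState n → Alph → S × QState n :=
  fun p σ => (A.tr p.1 σ, mApply (A.U p.1 σ) p.2)

lemma qState_eq (A : QFAC Alph S n) (x : List Alph) :
    A.qState x = (x.foldl A.step (A.s0, A.ψ0)).2 := rfl

lemma foldl_step_fst (A : QFAC Alph S n) :
    ∀ (z : List Alph) (s : S) (ψ : QState n), (z.foldl A.step (s, ψ)).1 = z.foldl A.tr s := by
  intro z
  induction z with
  | nil => intro s ψ; rfl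
  | cons σ z ih => intro s ψ; simpa [step] using ih (A.tr s σ) (mApply (A.U s σ) ψ)

lemma foldl_step_norm_sub (A : QFAC Alph S n) :
    ∀ (z : List Alph) (s : S) (ψ φ : QState n),
      ‖(z.foldl A.step (s, ψ)).2 - (z.foldl A.step (s, φ)).2‖ = ‖ψ - φ‖ := by
  intro z
  induction z with
  | nil => intro s ψ φ; rfl
  | cons σ z ih =>
    intro s ψ φ
    have := ih (A.tr s σ) (mApply (A.U s σ) ψ) (mApply (A.U s σ) φ)
    calc ‖((σ :: z).foldl A.step (s, ψ)).2 - ((σ :: z).foldl A.step (s, φ)).2‖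
        = ‖mApply (A.U s σ) ψ - mApply (A.U s σ) φ‖ := this
      _ = ‖mApply (A.U s σ) (ψ - φ)‖ := by rw [mApply_sub]
      _ = ‖ψ - φ‖ := norm_mApply_unitary (A.U_unitary s σ) _

lemma foldl_step_norm (A : QFAC Alph S n) :
    ∀ (z : List Alph) (s : S) (ψ : QState n), ‖(z.foldl A.step (s, ψ)).2‖ = ‖ψ‖ := by
  intro z
  induction z with
  | nil => intro s ψ; rfl
  | cons σ z ih =>
    intro s ψ
    calc ‖((σ :: z).foldl A.step (s, ψ)).2‖ = ‖mApply (A.U s σ) ψ‖ :=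
          ih (A.tr s σ) (mApply (A.U s σ) ψ)
      _ = ‖ψ‖ := norm_mApply_unitary (A.U_unitary s σ) _

lemma norm_qState (A : QFAC Alph S n) (x : List Alph) : ‖A.qState x‖ = 1 := by
  rw [qState_eq]
  have h := A.foldl_step_fst x A.s0 A.ψ0
  have : x.foldl A.step (A.s0, A.ψ0) =
      ((x.foldl A.step (A.s0, A.ψ0)).1, (x.foldl A.step (A.s0, A.ψ0)).2) := rfl
  rw [A.foldl_step_norm x A.s0 A.ψ0, A.ψ0_unit]

lemma foldl_step_eq (A : QFAC Alph S n) (x : List Alph) :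
    x.foldl A.step (A.s0, A.ψ0) = (A.sState x, A.qState x) := by
  have h1 := A.foldl_step_fst x A.s0 A.ψ0
  exact Prod.ext h1 rfl

lemma sState_append (A : QFAC Alph S n) (x z : List Alph) :
    A.sState (x ++ z) = z.foldl A.tr (A.sState x) := by
  simp [sState, List.foldl_append]

lemma qState_append (A : QFAC Alph S n) (x z : List Alph) :
    A.qState (x ++ z) = (z.foldl A.step (A.sState x, A.qState x)).2 := by
  rw [qState_eq, List.foldl_append, foldl_step_eq]

/-- Key continuity estimate. -/
lemma key (A : QFAC Alph S n) {x y : List Alph} (hs : A.sState x = A.sState y)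
    (z : List Alph) :
    |A.probAcc (x ++ z) - A.probAcc (y ++ z)| ≤ 2 * ‖A.qState x - A.qState y‖ := by
  have hsz : A.sState (x ++ z) = A.sState (y ++ z) := by
    rw [sState_append, sState_append, hs]
  set u := A.qState (x ++ z) with hu
  set w := A.qState (y ++ z) with hw
  have huw : ‖u - w‖ = ‖A.qState x - A.qState y‖ := by
    rw [hu, hw, qState_append, qState_append, hs]
    exact A.foldl_step_norm_sub z _ _ _
  set P := A.P (A.sState (x ++ z)) with hP
  have hPproj := A.P_proj (A.sState (x ++ z))
  have hux : A.probAcc (x ++ z) = ‖mApply P u‖ ^ 2 := rfl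
  have hwy : A.probAcc (y ++ z) = ‖mApply P w‖ ^ 2 := by
    rw [probAcc, ← hsz]
  set a := ‖mApply P u‖ with ha
  set b := ‖mApply P w‖ with hb
  have ha0 : 0 ≤ a := norm_nonneg _
  have hb0 : 0 ≤ b := norm_nonneg _
  have ha1 : a ≤ 1 := by
    rw [ha]
    calc ‖mApply P u‖ ≤ ‖u‖ := norm_mApply_proj_le hPproj.1 hPproj.2 u
      _ = 1 := A.norm_qState _
  have hb1 : b ≤ 1 := by
    rw [hb]
    calc ‖mApply P w‖ ≤ ‖w‖ := norm_mApply_proj_le hPproj.1 hPproj.2 w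
      _ = 1 := A.norm_qState _
  have hab : |a - b| ≤ ‖A.qState x - A.qState y‖ := by
    calc |a - b| ≤ ‖mApply P u - mApply P w‖ := abs_norm_sub_norm_le _ _
      _ = ‖mApply P (u - w)‖ := by rw [mApply_sub]
      _ ≤ ‖u - w‖ := norm_mApply_proj_le hPproj.1 hPproj.2 _
      _ = _ := huw
  have hd0 : 0 ≤ ‖A.qState x - A.qState y‖ := norm_nonneg _
  rw [hux, hwy]
  obtain ⟨h1, h2⟩ := abs_le.1 hab
  rw [abs_le]
  constructor <;> nlinarith

/-- Separation: inequivalent words with the same classical state have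
    quantum states at distance at least ε. -/
lemma sep (A : QFAC Alph S n) {L : Set (List Alph)} {lam ε : ℝ}
    (hrec : A.Recognizes L lam ε) {x y : List Alph}
    (hs : A.sState x = A.sState y) (hne : ¬ mnEquiv L x y) :
    ε ≤ ‖A.qState x - A.qState y‖ := by
  rw [mnEquiv, not_forall] at hne
  obtain ⟨z, hz⟩ := hne
  have hkey := A.key hs z
  rcases Classical.em (x ++ z ∈ L) with hx | hx <;> rcases Classical.em (y ++ z ∈ L) with hy | hy
  · exact absurd (iff_of_true hx hy) hz
  · have h1 := hrec.1 _ hx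
    have h2 := hrec.2 _ hy
    have : 2 * ε ≤ |A.probAcc (x ++ z) - A.probAcc (y ++ z)| := by
      have : 2 * ε ≤ A.probAcc (x ++ z) - A.probAcc (y ++ z) := by linarith
      exact this.trans (le_abs_self _)
    linarith
  · have h1 := hrec.2 _ hx
    have h2 := hrec.1 _ hy
    have : 2 * ε ≤ |A.probAcc (x ++ z) - A.probAcc (y ++ z)| := by
      have h3 : 2 * ε ≤ -(A.probAcc (x ++ z) - A.probAcc (y ++ z)) := by linarith
      exact h3.trans (neg_le_abs _)
    linarith
  · exact absurd (iff_of_false hx hy) hz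

end QFAC

/-- If a 1QFAC with `k` classical states and `n` quantum basis states
recognizes `L` with cut-point `lam` isolated by `ε`, then the number of Myhill–Nerode
classes of `L` (= number of states of the minimal DFA) is at most `k(1 + 2/ε)^(2n)`. -/
theorem stmt_4 {Alph S : Type} [Fintype Alph] [Fintype S] {n k : ℕ}
    (hk : Fintype.card S = k)
    (A : QFAC Alph S n) (L : Set (List Alph)) (lam ε : ℝ)
    (hlam : 0 < lam ∧ lam < 1) (hε : 0 < ε)
    (hrec : A.Recognizes L lam ε) :
    Finite (Quotient (mnSetoid L)) ∧
    (Nat.card (Quotient (mnSetoid L)) : ℝ) ≤ (k : ℝ) * (1 + 2 / ε) ^ (2 * n) := by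
  classical
  obtain ⟨hlam0, hlam1⟩ := hlam
  have hdim : Module.finrank ℝ (QState n) = 2 * n := by
    have h := Module.finrank_mul_finrank ℝ ℂ (EuclideanSpace ℂ (Fin n))
    rw [Complex.finrank_real_complex, finrank_euclideanSpace_fin] at h
    exact h.symm
  set B : ℝ := (1 + 2 / ε) ^ (2 * n) with hB
  let g : Quotient (mnSetoid L) → S × QState n :=
    fun c => (A.sState c.out, A.qState c.out)
  have gsep : ∀ c d : Quotient (mnSetoid L), c ≠ d → (g c).1 = (g d).1 →
      ε ≤ ‖(g c).2 - (g d).2‖ := by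
    intro c d hne h1
    exact A.sep hrec h1 (fun hequiv => hne (Quotient.out_equiv_out.mp hequiv))
  have gnorm : ∀ c, ‖(g c).2‖ ≤ 1 := fun c => le_of_eq (A.norm_qState _)
  have fibfin : ∀ s : S, {c : Quotient (mnSetoid L) | (g c).1 = s}.Finite := by
    intro s
    have hinj : Set.InjOn (fun c => (g c).2) {c | (g c).1 = s} := by
      intro c hc d hd hcd
      by_contra hne
      have h2 := gsep c d hne (hc.trans hd.symm)
      have hcd' : (g c).2 = (g d).2 := hcd
      rw [hcd'] at h2
      simp only [sub_self, norm_zero] at h2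
      linarith
    apply Set.Finite.of_finite_image ?_ hinj
    apply packing_set hε
    · rintro v ⟨c, hc, rfl⟩; exact gnorm c
    · rintro u ⟨c, hc, rfl⟩ v ⟨d, hd, rfl⟩ huv
      exact gsep c d (fun h => huv (by rw [h])) (hc.trans hd.symm)
  have hufin : (Set.univ : Set (Quotient (mnSetoid L))).Finite := by
    have huniv : (Set.univ : Set (Quotient (mnSetoid L))) =
        ⋃ s ∈ (Finset.univ : Finset S), {c | (g c).1 = s} := by
      ext c; simp
    rw [huniv]
    exact Set.Finite.biUnion (Finset.univ : Finset S).finite_toSet (fun s _ => fibfin s)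
  have hQfin : Finite (Quotient (mnSetoid L)) := Set.finite_univ_iff.mp hufin
  refine ⟨hQfin, ?_⟩
  haveI := hQfin
  haveI : Fintype (Quotient (mnSetoid L)) := Fintype.ofFinite _
  rw [Nat.card_eq_fintype_card, ← Finset.card_univ]
  have hsum : (Finset.univ : Finset (Quotient (mnSetoid L))).card =
      ∑ s : S, (Finset.univ.filter (fun c : Quotient (mnSetoid L) => (g c).1 = s)).card :=
    Finset.card_eq_sum_card_fiberwise (fun c _ => Finset.mem_univ _)
  rw [hsum]
  have bound : ∀ s : S,
      ((Finset.univ.filter (fun c : Quotient (mnSetoid L) => (g c).1 = s)).card : ℝ) ≤ B := by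
    intro s
    set F := Finset.univ.filter (fun c : Quotient (mnSetoid L) => (g c).1 = s) with hF
    have hinj : Set.InjOn (fun c => (g c).2) (F : Set (Quotient (mnSetoid L))) := by
      intro c hc d hd hcd
      by_contra hne
      have h1 : (g c).1 = s := (Finset.mem_filter.mp hc).2
      have h2 : (g d).1 = s := (Finset.mem_filter.mp hd).2
      have h3 := gsep c d hne (h1.trans h2.symm)
      have hcd' : (g c).2 = (g d).2 := hcd
      rw [hcd'] at h3
      simp only [sub_self, norm_zero] at h3
      linarith
    have hcard : F.card = (F.image (fun c => (g c).2)).card :=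
      (Finset.card_image_of_injOn hinj).symm
    rw [hcard]
    have hb := packing_finset hε (F.image fun c => (g c).2)
      (by
        rintro v hv
        obtain ⟨c, hc, rfl⟩ := Finset.mem_image.mp hv
        exact gnorm c)
      (by
        intro u hu v hv huv
        obtain ⟨c, hc, rfl⟩ := Finset.mem_image.mp hu
        obtain ⟨d, hd, rfl⟩ := Finset.mem_image.mp hv
        have h1 : (g c).1 = s := (Finset.mem_filter.mp hc).2
        have h2 : (g d).1 = s := (Finset.mem_filter.mp hd).2
        exact gsep c d (fun h => huv (by rw [h])) (h1.trans h2.symm))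
    rw [hdim] at hb
    exact hb
  calc ((∑ s : S, (Finset.univ.filter
          (fun c : Quotient (mnSetoid L) => (g c).1 = s)).card : ℕ) : ℝ)
      = ∑ s : S, ((Finset.univ.filter
          (fun c : Quotient (mnSetoid L) => (g c).1 = s)).card : ℝ) := by push_cast; rfl
    _ ≤ ∑ _s : S, B := Finset.sum_le_sum fun s _ => bound s
    _ = (Fintype.card S : ℝ) * B := by rw [Finset.sum_const, Finset.card_univ, nsmul_eq_mul]
    _ = (k : ℝ) * B := by rw [hk]


end
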